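/- arXiv:1507.06806 — 7 statements merged into one kernel-verified Lean document; each statement's English description precedes it below -/
import Mathlib

section
/- For every real number λ with 11/7 ≤ λ < 2, one has 29(λ-1)/√((48-24λ)² + (29λ-29)²) ≤ (8λ-5)/√((8λ-5)² + (12-6λ)²). -/
theorem stmt_1 (l : ℝ) (h1 : 11 / 7 ≤ l) (h2 : l < 2) :
    29 * (l - 1) / Real.sqrt ((48 - 24 * l) ^ 2 + (29 * l - 29) ^ 2) ≤
      (8 * l - 5) / Real.sqrt ((8 * l - 5) ^ 2 + (12 - 6 * l) ^ 2) := by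
  have hb : (0:ℝ) < 48 - 24*l := by linarith
  have hc : (0:ℝ) < 8*l - 5 := by linarith
  have ha : (0:ℝ) ≤ 29*(l-1) := by linarith
  have h1p : (0:ℝ) < (48 - 24 * l) ^ 2 + (29 * l - 29) ^ 2 := by positivity
  have h2p : (0:ℝ) < (8 * l - 5) ^ 2 + (12 - 6 * l) ^ 2 := by positivity
  rw [div_le_div_iff₀ (Real.sqrt_pos.mpr h1p) (Real.sqrt_pos.mpr h2p)]
  have e1 : 29*(l-1) * Real.sqrt ((8 * l - 5) ^ 2 + (12 - 6 * l) ^ 2)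
      = Real.sqrt ((29*(l-1))^2 * ((8 * l - 5) ^ 2 + (12 - 6 * l) ^ 2)) := by
    rw [Real.sqrt_mul (by positivity), Real.sqrt_sq ha]
  have e2 : (8*l-5) * Real.sqrt ((48 - 24 * l) ^ 2 + (29 * l - 29) ^ 2)
      = Real.sqrt ((8*l-5)^2 * ((48 - 24 * l) ^ 2 + (29 * l - 29) ^ 2)) := by
    rw [Real.sqrt_mul (by positivity), Real.sqrt_sq hc.le]
  rw [e1, e2]
  apply Real.sqrt_le_sqrt
  nlinarith [sq_nonneg (2-l), mul_nonneg (mul_nonneg (sq_nonneg (2-l)) hc.le) (by linarith : (0:ℝ) ≤ l-1), sq_nonneg ((2-l)*(l-1)), mul_pos hb hc]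
end

section
/- Let λ ≥ 1 and suppose 0 < cos α ≤ 1 with cos α > 29(λ-1)/√((48-24λ)² + (29λ-29)²) and 1 ≤ λ < 2. Then (3 cos α + (29/16)√(1 - cos²α)) - λ(3/2 cos α + (29/16)√(1 - cos²α)) > 0, i.e. (3 - (3/2)λ) cos α > (29/16)(λ - 1)√(1 - cos²α). -/
theorem stmt_2 (l c : ℝ) (h1 : 1 ≤ l) (h2 : l < 2) (hc0 : 0 < c) (hc1 : c ≤ 1)
    (hc : c > 29 * (l - 1) / Real.sqrt ((48 - 24 * l) ^ 2 + (29 * l - 29) ^ 2)) :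
    (3 * c + 29 / 16 * Real.sqrt (1 - c ^ 2)) -
      l * (3 / 2 * c + 29 / 16 * Real.sqrt (1 - c ^ 2)) > 0 := by
  set S := Real.sqrt ((48 - 24 * l) ^ 2 + (29 * l - 29) ^ 2) with hSdef
  have hargpos : (0:ℝ) < (48 - 24 * l) ^ 2 + (29 * l - 29) ^ 2 := by
    have : 0 < (48 - 24 * l) ^ 2 := pow_pos (by linarith) 2
    nlinarith [sq_nonneg (29 * l - 29)]
  have hSpos : 0 < S := Real.sqrt_pos.mpr hargpos
  have hS2 : S ^ 2 = (48 - 24 * l) ^ 2 + (29 * l - 29) ^ 2 :=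
    Real.sq_sqrt hargpos.le
  have hc' : 29 * (l - 1) < c * S := by
    have := (div_lt_iff₀ hSpos).mp hc
    linarith
  set t := Real.sqrt (1 - c ^ 2) with htdef
  have ht0 : 0 ≤ t := Real.sqrt_nonneg _
  have ht2 : t ^ 2 = 1 - c ^ 2 := Real.sq_sqrt (by nlinarith)
  -- squared inequality
  have hsq : (29 * (l - 1)) ^ 2 < (c * S) ^ 2 := by
    have h0 : 0 ≤ 29 * (l - 1) := by linarith
    nlinarith
  have hkey : (29 * (l - 1) * t) ^ 2 < ((48 - 24 * l) * c) ^ 2 := by nlinarith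
  have hfin : 29 * (l - 1) * t < (48 - 24 * l) * c := by
    have hA : 0 < (48 - 24 * l) * c := by nlinarith
    have hB : 0 ≤ 29 * (l - 1) * t := mul_nonneg (by linarith) ht0
    nlinarith [hkey, hA, hB]
  nlinarith [hfin]
end

section
/- On a Kähler manifold, for any tangent vectors X and Y, the sectional-type curvature quantity R(X,Y) := R(X,Y,X,Y) satisfies R(X,Y) = (1/32)[3R(X+JY) + 3R(X-JY) - R(X+Y) - R(X-Y) - 4R(X) - 4R(Y)], where R(Z) := R(Z, JZ, Z, JZ). -/
set_option maxHeartbeats 1600000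


/-- Sectional curvature through holomorphic sectional curvature on a Kähler manifold,
stated for an algebraic curvature tensor `R` on a real vector space with a compatible
complex structure `J`. -/
theorem stmt_3 {V : Type*} [AddCommGroup V] [Module ℝ V]
    (R : V →ₗ[ℝ] V →ₗ[ℝ] V →ₗ[ℝ] V →ₗ[ℝ] ℝ) (J : V →ₗ[ℝ] V)
    (hskew1 : ∀ x y z w, R x y z w = -R y x z w)
    (hskew2 : ∀ x y z w, R x y z w = -R x y w z)
    (hpair : ∀ x y z w, R x y z w = R z w x y)
    (hbianchi : ∀ x y z w, R x y z w + R y z x w + R z x y w = 0)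
    (hJ2 : ∀ x, J (J x) = -x)
    (hJinv : ∀ x y z w, R (J x) (J y) z w = R x y z w)
    (X Y : V) :
    R X Y X Y = (1 / 32) *
      (3 * R (X + J Y) (J (X + J Y)) (X + J Y) (J (X + J Y))
       + 3 * R (X - J Y) (J (X - J Y)) (X - J Y) (J (X - J Y))
       - R (X + Y) (J (X + Y)) (X + Y) (J (X + Y))
       - R (X - Y) (J (X - Y)) (X - Y) (J (X - Y))
       - 4 * R X (J X) X (J X) - 4 * R Y (J Y) Y (J Y)) := by
  have hA : ∀ x y z w, R (J x) y z w = -R x (J y) z w := by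
    intro x y z w
    have h := hJinv x (J y) z w
    rw [hJ2] at h
    simp only [map_neg, LinearMap.neg_apply] at h
    linarith
  have hsub : ∀ a b c d e, R (a - b) c d e = R a c d e - R b c d e := by
    intro a b c d e
    rw [sub_eq_add_neg a b, ← neg_one_smul ℝ b]
    simp only [map_add, map_smul, LinearMap.add_apply, LinearMap.smul_apply, smul_eq_mul]
    ring
  simp only [hsub, map_add, map_sub, hJ2, map_neg, LinearMap.add_apply, LinearMap.sub_apply,
    LinearMap.neg_apply]
  linear_combination
    (1/16 : ℝ) * hskew1 X Y (J X) (J Y)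
    + (1/2 : ℝ) * hskew2 X Y (J X) (J Y)
    - (13/16 : ℝ) * hpair X Y (J X) (J Y)
    + (1/16 : ℝ) * hbianchi X Y (J X) (J Y)
    - (3/16 : ℝ) * hpair X Y (J Y) (J X)
    - (1/8 : ℝ) * hbianchi X Y (J Y) (J X)
    - (1/16 : ℝ) * hskew1 X (J X) Y (J Y)
    + (3/8 : ℝ) * hskew2 X (J X) Y (J Y)
    - (3/16 : ℝ) * hpair X (J X) Y (J Y)
    - (1/16 : ℝ) * hbianchi X (J X) Y (J Y)
    - (3/16 : ℝ) * hpair X (J X) (J Y) Y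
    + (1/8 : ℝ) * hskew1 X (J Y) Y (J X)
    - (1/32 : ℝ) * hskew1 Y Y (J X) (J X)
    + (1/16 : ℝ) * hbianchi Y Y (J X) (J X)
    + (3/16 : ℝ) * hskew2 Y (J Y) Y (J Y)
    - (3/16 : ℝ) * hskew1 Y (J Y) (J Y) Y
    + (3/16 : ℝ) * hskew2 (J X) (J Y) (J X) (J Y)
    - (3/16 : ℝ) * hskew1 (J X) (J Y) (J Y) (J X)
    - (13/16 : ℝ) * hJinv X Y X Y
    + (1/16 : ℝ) * hA X Y X (J Y)
    - (1/16 : ℝ) * hA X Y Y (J X)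
    - (3/16 : ℝ) * hJinv X Y (J X) (J Y)
end

section
/- Let (M,g,J) be a Kähler manifold whose holomorphic sectional curvatures lie in [k₁, k₂]. For any two orthogonal tangent vectors X, Y at a point, with a = |X|², b = |Y|², x = ⟨JX, Y⟩, the sectional-type quantity R(X,Y) = R(X,Y,X,Y) satisfies (1/16)[(3(a+b)² + 12x²)k₁ - (3a² + 3b² + 2ab)k₂] ≤ R(X,Y) ≤ (1/16)[(3(a+b)² + 12x²)k₂ - (3a² + 3b² + 2ab)k₁]. -/
open scoped RealInnerProductSpace

set_option maxHeartbeats 2000000 in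
/-- Two-sided bound on sectional-type curvature in terms of holomorphic sectional
curvature bounds on a Kähler manifold (algebraic model at a point). -/
theorem stmt_5 {V : Type*} [NormedAddCommGroup V] [InnerProductSpace ℝ V]
    (R : V →ₗ[ℝ] V →ₗ[ℝ] V →ₗ[ℝ] V →ₗ[ℝ] ℝ) (J : V →ₗ[ℝ] V)
    (hskew1 : ∀ x y z w, R x y z w = -R y x z w)
    (hskew2 : ∀ x y z w, R x y z w = -R x y w z)
    (hpair : ∀ x y z w, R x y z w = R z w x y)
    (hbianchi : ∀ x y z w, R x y z w + R y z x w + R z x y w = 0)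
    (hJ2 : ∀ v, J (J v) = -v)
    (hJiso : ∀ v w : V, ⟪J v, J w⟫ = ⟪v, w⟫)
    (hJinv : ∀ x y z w, R (J x) (J y) z w = R x y z w)
    (k₁ k₂ : ℝ)
    (hlow : ∀ z : V, k₁ * ‖z‖ ^ 4 ≤ R z (J z) z (J z))
    (hhigh : ∀ z : V, R z (J z) z (J z) ≤ k₂ * ‖z‖ ^ 4)
    (X Y : V) (horth : ⟪X, Y⟫ = 0)
    (a b x : ℝ) (ha : a = ‖X‖ ^ 2) (hb : b = ‖Y‖ ^ 2) (hx : x = ⟪J X, Y⟫) :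
    (1 / 16) * ((3 * (a + b) ^ 2 + 12 * x ^ 2) * k₁ - (3 * a ^ 2 + 3 * b ^ 2 + 2 * a * b) * k₂)
      ≤ R X Y X Y ∧
    R X Y X Y ≤
      (1 / 16) * ((3 * (a + b) ^ 2 + 12 * x ^ 2) * k₂ - (3 * a ^ 2 + 3 * b ^ 2 + 2 * a * b) * k₁) := by
  -- derived J-invariance variant: R (J X) Y z w = - R X (J Y) z w
  have hJXW : ∀ z w, -R (J X) Y z w = R X (J Y) z w := by
    intro z w
    have h := hJinv X (J Y) z w
    rw [hJ2] at h
    simpa using h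
  -- key polarization identity
  have key : 32 * R X Y X Y =
      3 * R (X + J Y) (J X - Y) (X + J Y) (J X - Y)
      + 3 * R (X - J Y) (J X + Y) (X - J Y) (J X + Y)
      - R (X + Y) (J X + J Y) (X + Y) (J X + J Y)
      - R (X - Y) (J X - J Y) (X - Y) (J X - J Y)
      - 4 * R X (J X) X (J X) - 4 * R Y (J Y) Y (J Y) := by
    have hs : ∀ u v : V, u - v = u + (-1 : ℝ) • v := fun u v => by rw [neg_one_smul, sub_eq_add_neg]
    simp only [hs, map_add, map_smul, LinearMap.add_apply, LinearMap.smul_apply, smul_eq_mul]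
    linear_combination
      (-8) * (hskew1 X (J X) Y (J Y)) - (2) * (hskew1 Y (J X) X (J Y))
      + (2) * (hskew1 Y (J X) Y (J X)) + (6) * (hskew1 Y (J Y) X (J X))
      - (6) * (hskew1 Y (J Y) (J Y) Y) + (6) * (hskew1 (J X) (J Y) X Y)
      - (6) * (hskew1 (J X) (J Y) (J Y) (J X))
      + (6) * (hskew2 X Y (J X) (J Y)) + (6) * (hskew2 X (J X) Y (J Y))
      + (6) * (hskew2 Y (J Y) Y (J Y)) + (6) * (hskew2 (J X) (J Y) (J X) (J Y))
      - (20) * (hpair X Y (J X) (J Y)) + (4) * (hpair X (J X) Y (J Y))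
      + (4) * (hpair X (J Y) Y (J X))
      + (8) * (hbianchi X Y (J X) (J Y))
      - (26) * (hJinv X Y X Y) - (6) * (hJinv X Y (J X) (J Y))
      - (2) * (hJXW X (J Y)) + (2) * (hJXW Y (J X))
  -- inner product facts
  have hYY : ⟪J Y, J Y⟫ = ‖Y‖ ^ 2 := by rw [hJiso, real_inner_self_eq_norm_sq]
  have hXJY : ⟪X, J Y⟫ = -x := by
    have h := hJiso X (J Y)
    rw [hJ2, inner_neg_right] at h
    rw [← h, ← hx]
  have hJXJY : ⟪J X, J Y⟫ = 0 := by rw [hJiso, horth]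
  have hXJX : ⟪X, J X⟫ = -x + x := by
    have h := hJiso X (J X)
    rw [hJ2, inner_neg_right] at h
    have := real_inner_comm X (J X)
    linarith [h, this]
  have hXJX' : ⟪X, J X⟫ = 0 := by linarith [hXJX]
  have hnJY : ‖J Y‖ ^ 2 = b := by rw [← real_inner_self_eq_norm_sq, hYY, hb]
  have n1 : ‖X + J Y‖ ^ 2 = a + b - 2 * x := by
    rw [norm_add_sq_real, hXJY, hnJY, ← ha]; ring
  have n2 : ‖X - J Y‖ ^ 2 = a + b + 2 * x := by
    rw [norm_sub_sq_real, hXJY, hnJY, ← ha]; ring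
  have n3 : ‖X + Y‖ ^ 2 = a + b := by
    rw [norm_add_sq_real, horth, ← ha, ← hb]; ring
  have n4 : ‖X - Y‖ ^ 2 = a + b := by
    rw [norm_sub_sq_real, horth, ← ha, ← hb]; ring
  -- rewrite J of combined vectors
  have j1 : J (X + J Y) = J X - Y := by rw [map_add, hJ2]; abel
  have j2 : J (X - J Y) = J X + Y := by rw [map_sub, hJ2]; abel
  have j3 : J (X + Y) = J X + J Y := map_add J X Y
  have j4 : J (X - Y) = J X - J Y := map_sub J X Y
  have p4 : ∀ z : V, ‖z‖ ^ 4 = (‖z‖ ^ 2) ^ 2 := fun z => by ring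
  -- six two-sided bounds
  have l1 := hlow (X + J Y); have u1 := hhigh (X + J Y)
  rw [j1, p4, n1] at l1 u1
  have l2 := hlow (X - J Y); have u2 := hhigh (X - J Y)
  rw [j2, p4, n2] at l2 u2
  have l3 := hlow (X + Y); have u3 := hhigh (X + Y)
  rw [j3, p4, n3] at l3 u3
  have l4 := hlow (X - Y); have u4 := hhigh (X - Y)
  rw [j4, p4, n4] at l4 u4
  have l5 := hlow X; have u5 := hhigh X
  rw [p4, ← ha] at l5 u5
  have l6 := hlow Y; have u6 := hhigh Y
  rw [p4, ← hb] at l6 u6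
  constructor
  · nlinarith [key, l1, l2, u3, u4, u5, u6]
  · nlinarith [key, u1, u2, l3, l4, l5, l6]
end

section
/- Let e₁, e₂, e₃, e₄ be an orthonormal frame on a Kähler surface with holomorphic sectional curvatures in [k₁,k₂] (k₁ > 0), such that Je₁ = cos α·e₂ + y·e₃ + z·e₄ with cos²α + y² + z² = 1 and the complex structure takes the standard form (so ⟨Je₃,e₄⟩ = cos α, ⟨Je₁,e₃⟩ = ⟨Je₄,e₂⟩ = y, ⟨Je₁,e₄⟩ = ⟨Je₂,e₃⟩ = z). Then (1/4)[(3 + 3cos²α)k₁ - 2k₂] ≤ R₁₂₁₂ ≤ (1/4)[(3 + 3cos²α)k₂ - 2k₁]. -/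
open scoped RealInnerProductSpace

/-- The key polarization identity for Kähler curvature tensors. -/
lemma kahler_key {V : Type*} [AddCommGroup V] [Module ℝ V]
    (R : V →ₗ[ℝ] V →ₗ[ℝ] V →ₗ[ℝ] V →ₗ[ℝ] ℝ) (J : V →ₗ[ℝ] V)
    (hskew1 : ∀ x y z w, R x y z w = -R y x z w)
    (hskew2 : ∀ x y z w, R x y z w = -R x y w z)
    (hpair : ∀ x y z w, R x y z w = R z w x y)
    (hbianchi : ∀ x y z w, R x y z w + R y z x w + R z x y w = 0)
    (hJ2 : ∀ v, J (J v) = -v)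
    (hJinv : ∀ x y z w, R (J x) (J y) z w = R x y z w)
    (X Y : V) :
    R X Y X Y = 3/32 * (R (X + J Y) (J X - Y) (X + J Y) (J X - Y)
                      + R (X - J Y) (J X + Y) (X - J Y) (J X + Y))
      - 1/32 * (R (X + Y) (J X + J Y) (X + Y) (J X + J Y)
              + R (X - Y) (J X - J Y) (X - Y) (J X - J Y))
      - 1/8 * (R X (J X) X (J X) + R Y (J Y) Y (J Y)) := by
  have h89 := hJinv X Y X Y
  have h135 := hskew1 X Y (J X) (J Y)
  have h136 := hskew2 X Y (J X) (J Y)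
  have h137 := hpair X Y (J X) (J Y)
  have h138 := hbianchi X Y (J X) (J Y)
  have h150 := hskew1 X Y (J Y) (J X)
  have h152 := hpair X Y (J Y) (J X)
  have h153 := hbianchi X Y (J Y) (J X)
  have h195 := hskew1 X (J X) Y (J Y)
  have h196 := hskew2 X (J X) Y (J Y)
  have h197 := hpair X (J X) Y (J Y)
  have h198 := hbianchi X (J X) Y (J Y)
  have h227 := hpair X (J X) (J Y) Y
  have h259 := hJinv X (J Y) X (J Y)
  rw [hJ2] at h259
  simp only [map_neg, LinearMap.neg_apply] at h259
  have h270 := hskew1 X (J Y) Y (J X)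
  have h274 := hJinv X (J Y) Y (J X)
  rw [hJ2] at h274
  simp only [map_neg, LinearMap.neg_apply] at h274
  have h394 := hJinv Y X (J Y) (J X)
  have h450 := hskew1 Y Y (J X) (J X)
  have h453 := hbianchi Y Y (J X) (J X)
  have h596 := hskew2 Y (J Y) Y (J Y)
  have h625 := hskew1 Y (J Y) (J Y) Y
  rw [show X - J Y = X + (-1:ℝ) • J Y by simp [sub_eq_add_neg], show X - Y = X + (-1:ℝ) • Y by simp [sub_eq_add_neg]]
  simp only [map_add, map_sub, map_smul, LinearMap.add_apply, LinearMap.sub_apply, LinearMap.smul_apply, smul_eq_mul]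
  linarith

theorem stmt_6 {V : Type*} [NormedAddCommGroup V] [InnerProductSpace ℝ V]
    (R : V →ₗ[ℝ] V →ₗ[ℝ] V →ₗ[ℝ] V →ₗ[ℝ] ℝ) (J : V →ₗ[ℝ] V)
    (hskew1 : ∀ x y z w, R x y z w = -R y x z w)
    (hskew2 : ∀ x y z w, R x y z w = -R x y w z)
    (hpair : ∀ x y z w, R x y z w = R z w x y)
    (hbianchi : ∀ x y z w, R x y z w + R y z x w + R z x y w = 0)
    (hJ2 : ∀ v, J (J v) = -v)
    (hJiso : ∀ v w : V, ⟪J v, J w⟫ = ⟪v, w⟫)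
    (hJinv : ∀ x y z w, R (J x) (J y) z w = R x y z w)
    (k₁ k₂ : ℝ) (hk₁ : 0 < k₁)
    (hlow : ∀ v : V, k₁ * ‖v‖ ^ 4 ≤ R v (J v) v (J v))
    (hhigh : ∀ v : V, R v (J v) v (J v) ≤ k₂ * ‖v‖ ^ 4)
    (e : Fin 4 → V) (he : Orthonormal ℝ e)
    (c y z : ℝ) (hcyz : c ^ 2 + y ^ 2 + z ^ 2 = 1)
    (hJ1 : J (e 0) = c • e 1 + y • e 2 + z • e 3)
    (hJ2e : J (e 1) = -c • e 0 + z • e 2 - y • e 3)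
    (hJ3 : J (e 2) = -y • e 0 - z • e 1 + c • e 3)
    (hJ4 : J (e 3) = -z • e 0 + y • e 1 - c • e 2) :
    (1 / 4) * ((3 + 3 * c ^ 2) * k₁ - 2 * k₂) ≤ R (e 0) (e 1) (e 0) (e 1) ∧
    R (e 0) (e 1) (e 0) (e 1) ≤ (1 / 4) * ((3 + 3 * c ^ 2) * k₂ - 2 * k₁) := by
  set X := e 0 with hX
  set Y := e 1 with hY
  have key := kahler_key R J hskew1 hskew2 hpair hbianchi hJ2 hJinv X Y
  -- norms
  have hnX : ‖X‖ = 1 := he.1 0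
  have hnY : ‖Y‖ = 1 := he.1 1
  have hXY : ⟪X, Y⟫ = 0 := he.2 (by decide)
  have h02 : ⟪X, e 2⟫ = 0 := he.2 (by decide)
  have h03 : ⟪X, e 3⟫ = 0 := he.2 (by decide)
  have hXJY : ⟪X, J Y⟫ = -c := by
    rw [hJ2e, inner_sub_right, inner_add_right, inner_smul_right, inner_smul_right,
      inner_smul_right, real_inner_self_eq_norm_sq, hnX, h02, h03]
    ring
  have hnJY : ‖J Y‖ ^ 2 = 1 := by
    rw [← real_inner_self_eq_norm_sq, hJiso, real_inner_self_eq_norm_sq, hnY]; norm_num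
  have hn1 : ‖X + J Y‖ ^ 2 = 2 - 2 * c := by
    rw [norm_add_sq_real, hXJY, hnJY, hnX]; ring
  have hn2 : ‖X - J Y‖ ^ 2 = 2 + 2 * c := by
    rw [norm_sub_sq_real, hXJY, hnJY, hnX]; ring
  have hn3 : ‖X + Y‖ ^ 2 = 2 := by
    rw [norm_add_sq_real, hXY, hnX, hnY]; ring
  have hn4 : ‖X - Y‖ ^ 2 = 2 := by
    rw [norm_sub_sq_real, hXY, hnX, hnY]; ring
  have hpow : ∀ v : V, ‖v‖ ^ 4 = (‖v‖ ^ 2) ^ 2 := by intro v; ring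
  -- J of test vectors
  have hJa : J (X + J Y) = J X - Y := by rw [map_add, hJ2]; abel
  have hJb : J (X - J Y) = J X + Y := by rw [map_sub, hJ2]; abel
  have hJc : J (X + Y) = J X + J Y := map_add J X Y
  have hJd : J (X - Y) = J X - J Y := map_sub J X Y
  -- bounds on the holomorphic sectional curvatures
  have hu1 := hhigh (X + J Y); have hl1 := hlow (X + J Y)
  rw [hJa, hpow, hn1] at hu1 hl1
  have hu2 := hhigh (X - J Y); have hl2 := hlow (X - J Y)
  rw [hJb, hpow, hn2] at hu2 hl2
  have hu3 := hhigh (X + Y); have hl3 := hlow (X + Y)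
  rw [hJc, hpow, hn3] at hu3 hl3
  have hu4 := hhigh (X - Y); have hl4 := hlow (X - Y)
  rw [hJd, hpow, hn4] at hu4 hl4
  have hu5 := hhigh X; have hl5 := hlow X
  rw [hpow, hnX] at hu5 hl5
  have hu6 := hhigh Y; have hl6 := hlow Y
  rw [hpow, hnY] at hu6 hl6
  norm_num at hu5 hl5 hu6 hl6
  have e1 : k₂ * (2 - 2*c)^2 + k₂ * (2 + 2*c)^2 = k₂ * (8 + 8*c^2) := by ring
  have e2 : k₁ * (2 - 2*c)^2 + k₁ * (2 + 2*c)^2 = k₁ * (8 + 8*c^2) := by ring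
  have e3 : (1/4) * ((3 + 3*c^2) * k₂ - 2*k₁) = 3/32 * (k₂ * (8 + 8*c^2)) - 1/32*(k₁*2^2 + k₁*2^2) - 1/8*(k₁ + k₁) := by ring
  have e4 : (1/4) * ((3 + 3*c^2) * k₁ - 2*k₂) = 3/32 * (k₁ * (8 + 8*c^2)) - 1/32*(k₂*2^2 + k₂*2^2) - 1/8*(k₂ + k₂) := by ring
  constructor
  · rw [e4]; linarith
  · rw [e3]; linarith
end

section
/- With the same frame and hypotheses as above, the mixed curvature component R₂₁₃₁ = R(e₂,e₁,e₃,e₁) satisfies (1/32)[(23 + 6(cos α + y)²)k₁ - (23 + 6(cos α - y)²)k₂] ≤ R₂₁₃₁ ≤ (1/32)[(23 + 6(cos α + y)²)k₂ - (23 + 6(cos α - y)²)k₁]. -/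
open scoped RealInnerProductSpace

set_option maxHeartbeats 2000000

theorem stmt_7 {V : Type*} [NormedAddCommGroup V] [InnerProductSpace ℝ V]
    (R : V →ₗ[ℝ] V →ₗ[ℝ] V →ₗ[ℝ] V →ₗ[ℝ] ℝ) (J : V →ₗ[ℝ] V)
    (hskew1 : ∀ x y z w, R x y z w = -R y x z w)
    (hskew2 : ∀ x y z w, R x y z w = -R x y w z)
    (hpair : ∀ x y z w, R x y z w = R z w x y)
    (hbianchi : ∀ x y z w, R x y z w + R y z x w + R z x y w = 0)
    (hJ2 : ∀ v, J (J v) = -v)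
    (hJiso : ∀ v w : V, ⟪J v, J w⟫ = ⟪v, w⟫)
    (hJinv : ∀ x y z w, R (J x) (J y) z w = R x y z w)
    (k₁ k₂ : ℝ) (hk₁ : 0 < k₁)
    (hlow : ∀ v : V, k₁ * ‖v‖ ^ 4 ≤ R v (J v) v (J v))
    (hhigh : ∀ v : V, R v (J v) v (J v) ≤ k₂ * ‖v‖ ^ 4)
    (e : Fin 4 → V) (he : Orthonormal ℝ e)
    (c y z : ℝ) (hcyz : c ^ 2 + y ^ 2 + z ^ 2 = 1)
    (hJ1 : J (e 0) = c • e 1 + y • e 2 + z • e 3)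
    (hJ2e : J (e 1) = -c • e 0 + z • e 2 - y • e 3)
    (hJ3 : J (e 2) = -y • e 0 - z • e 1 + c • e 3)
    (hJ4 : J (e 3) = -z • e 0 + y • e 1 - c • e 2) :
    (1 / 32) * ((23 + 6 * (c + y) ^ 2) * k₁ - (23 + 6 * (c - y) ^ 2) * k₂)
      ≤ R (e 1) (e 0) (e 2) (e 0) ∧
    R (e 1) (e 0) (e 2) (e 0)
      ≤ (1 / 32) * ((23 + 6 * (c + y) ^ 2) * k₂ - (23 + 6 * (c - y) ^ 2) * k₁) := by
  -- basic inner product facts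
  have hii : ∀ i, ⟪e i, e i⟫ = 1 := fun i => by
    rw [real_inner_self_eq_norm_sq, he.1 i]; norm_num
  have hij : ∀ i j, i ≠ j → ⟪e i, e j⟫ = 0 := fun i j h => he.2 h
  have hJne : ∀ X W : V, ⟪X, J W⟫ = -⟪J X, W⟫ := by
    intro X W
    have h := hJiso X (J W)
    rw [hJ2] at h
    rw [← h, inner_neg_right]
  have hinnJ : ∀ W : V, ⟪J W, J W⟫ = ⟪W, W⟫ := fun W => hJiso W W
  -- the key curvature identity (Berger polarization)
  have key : ∀ X Y : V,
      32 * R X Y X Y =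
        3 * R (X + J Y) (J X - Y) (X + J Y) (J X - Y)
      + 3 * R (X - J Y) (J X + Y) (X - J Y) (J X + Y)
      - R (X + Y) (J X + J Y) (X + Y) (J X + J Y)
      - R (X - Y) (J X - J Y) (X - Y) (J X - J Y)
      - 4 * R X (J X) X (J X) - 4 * R Y (J Y) Y (J Y) := by
    intro X Y
    have j1 := hJinv X Y X Y
    have j2 := hJinv X Y (J Y) (J X)
    have j3 : R X (J Y) X (J Y) = -R (J X) Y X (J Y) := by
      have h := hJinv X (J Y) X (J Y)
      rw [hJ2] at h
      simp only [map_neg, LinearMap.neg_apply] at h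
      exact h.symm
    have j4 : R X (J Y) Y (J X) = -R (J X) Y Y (J X) := by
      have h := hJinv X (J Y) Y (J X)
      rw [hJ2] at h
      simp only [map_neg, LinearMap.neg_apply] at h
      exact h.symm
    have hsubR : ∀ a b c d f : V, R (a - b) c d f = R a c d f - R b c d f := by
      intro a b c d f
      rw [sub_eq_add_neg, map_add, show -b = (-1 : ℝ) • b by simp, map_smul]
      simp only [LinearMap.add_apply, LinearMap.smul_apply, smul_eq_mul]
      ring
    simp only [map_add, map_sub, LinearMap.add_apply, LinearMap.sub_apply, hsubR]
    linear_combination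
      (-2 : ℝ) * hskew1 X (J X) Y (J Y) + 8 * hskew2 X (J X) Y (J Y)
      + (-2 : ℝ) * hpair X (J X) Y (J Y) + (-2 : ℝ) * hbianchi X (J X) Y (J Y)
      + (-6 : ℝ) * hpair X (J X) (J Y) Y + 4 * hbianchi X (J X) (J Y) Y
      + (-26 : ℝ) * j1
      + 2 * hskew1 X Y (J X) (J Y) + 18 * hskew2 X Y (J X) (J Y)
      + (-22 : ℝ) * hpair X Y (J X) (J Y) + 2 * hbianchi X Y (J X) (J Y)
      + (-6 : ℝ) * hpair X Y (J Y) (J X) + 6 * j2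
      + 2 * j3
      + (-4 : ℝ) * hskew1 X (J Y) (J X) Y + 4 * hskew2 X (J Y) (J X) Y
      + (-2 : ℝ) * j4
      + 2 * hskew1 (J X) Y Y (J X)
      + (-6 : ℝ) * hskew1 (J X) (J Y) (J Y) (J X)
      + 6 * hskew2 Y (J Y) Y (J Y)
      + (-6 : ℝ) * hskew1 Y (J Y) (J Y) Y
  -- inner product values
  have i0P : ⟪e 0, e 1 + e 2⟫ = 0 := by
    rw [inner_add_right, hij 0 1 (by decide), hij 0 2 (by decide)]; norm_num
  have i0M : ⟪e 0, e 1 - e 2⟫ = 0 := by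
    rw [inner_sub_right, hij 0 1 (by decide), hij 0 2 (by decide)]; norm_num
  have iPP : ⟪e 1 + e 2, e 1 + e 2⟫ = 2 := by
    rw [real_inner_add_add_self, hii, hii, hij 1 2 (by decide)]; norm_num
  have iMM : ⟪e 1 - e 2, e 1 - e 2⟫ = 2 := by
    rw [real_inner_sub_sub_self, hii, hii, hij 1 2 (by decide)]; norm_num
  have iJ0P : ⟪J (e 0), e 1 + e 2⟫ = c + y := by
    rw [hJ1]
    rw [inner_add_right, inner_add_left, inner_add_left, inner_add_left,
      inner_add_left, real_inner_smul_left, real_inner_smul_left,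
      real_inner_smul_left, real_inner_smul_left, real_inner_smul_left,
      real_inner_smul_left, hii, hii, hij 1 2 (by decide), hij 2 1 (by decide),
      hij 3 1 (by decide), hij 3 2 (by decide)]
    ring
  have iJ0M : ⟪J (e 0), e 1 - e 2⟫ = c - y := by
    rw [hJ1]
    rw [inner_sub_right, inner_add_left, inner_add_left, inner_add_left,
      inner_add_left, real_inner_smul_left, real_inner_smul_left,
      real_inner_smul_left, real_inner_smul_left, real_inner_smul_left,
      real_inner_smul_left, hii, hii, hij 1 2 (by decide), hij 2 1 (by decide),
      hij 3 1 (by decide), hij 3 2 (by decide)]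
    ring
  have i0JP : ⟪e 0, J (e 1 + e 2)⟫ = -(c + y) := by rw [hJne, iJ0P]
  have i0JM : ⟪e 0, J (e 1 - e 2)⟫ = -(c - y) := by rw [hJne, iJ0M]
  -- norm squares
  have pow4 : ∀ (v : V) (t : ℝ), ‖v‖ ^ 2 = t → ‖v‖ ^ 4 = t ^ 2 := by
    intro v t h
    rw [show (4 : ℕ) = 2 * 2 from rfl, pow_mul, h]
  have n0 : ‖e 0‖ ^ 2 = 1 := by rw [he.1 0]; norm_num
  have nP : ‖e 1 + e 2‖ ^ 2 = 2 := by rw [← real_inner_self_eq_norm_sq, iPP]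
  have nM : ‖e 1 - e 2‖ ^ 2 = 2 := by rw [← real_inner_self_eq_norm_sq, iMM]
  have nXP : ‖e 0 + (e 1 + e 2)‖ ^ 2 = 3 := by
    rw [← real_inner_self_eq_norm_sq, real_inner_add_add_self, hii, i0P, iPP]; norm_num
  have nXmP : ‖e 0 - (e 1 + e 2)‖ ^ 2 = 3 := by
    rw [← real_inner_self_eq_norm_sq, real_inner_sub_sub_self, hii, i0P, iPP]; norm_num
  have nXM : ‖e 0 + (e 1 - e 2)‖ ^ 2 = 3 := by
    rw [← real_inner_self_eq_norm_sq, real_inner_add_add_self, hii, i0M, iMM]; norm_num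
  have nXmM : ‖e 0 - (e 1 - e 2)‖ ^ 2 = 3 := by
    rw [← real_inner_self_eq_norm_sq, real_inner_sub_sub_self, hii, i0M, iMM]; norm_num
  have nXJP : ‖e 0 + J (e 1 + e 2)‖ ^ 2 = 3 - 2 * (c + y) := by
    rw [← real_inner_self_eq_norm_sq, real_inner_add_add_self, hii, i0JP, hinnJ, iPP]; ring
  have nXmJP : ‖e 0 - J (e 1 + e 2)‖ ^ 2 = 3 + 2 * (c + y) := by
    rw [← real_inner_self_eq_norm_sq, real_inner_sub_sub_self, hii, i0JP, hinnJ, iPP]; ring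
  have nXJM : ‖e 0 + J (e 1 - e 2)‖ ^ 2 = 3 - 2 * (c - y) := by
    rw [← real_inner_self_eq_norm_sq, real_inner_add_add_self, hii, i0JM, hinnJ, iMM]; ring
  have nXmJM : ‖e 0 - J (e 1 - e 2)‖ ^ 2 = 3 + 2 * (c - y) := by
    rw [← real_inner_self_eq_norm_sq, real_inner_sub_sub_self, hii, i0JM, hinnJ, iMM]; ring
  -- J of the combined vectors
  have eJP : J (e 0 + J (e 1 + e 2)) = J (e 0) - (e 1 + e 2) := by
    rw [map_add, hJ2]; abel
  have eJmP : J (e 0 - J (e 1 + e 2)) = J (e 0) + (e 1 + e 2) := by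
    rw [map_sub, hJ2]; abel
  have eJM : J (e 0 + J (e 1 - e 2)) = J (e 0) - (e 1 - e 2) := by
    rw [map_add, hJ2]; abel
  have eJmM : J (e 0 - J (e 1 - e 2)) = J (e 0) + (e 1 - e 2) := by
    rw [map_sub, hJ2]; abel
  have eP : J (e 0 + (e 1 + e 2)) = J (e 0) + J (e 1 + e 2) := map_add J _ _
  have emP : J (e 0 - (e 1 + e 2)) = J (e 0) - J (e 1 + e 2) := map_sub J _ _
  have eM : J (e 0 + (e 1 - e 2)) = J (e 0) + J (e 1 - e 2) := map_add J _ _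
  have emM : J (e 0 - (e 1 - e 2)) = J (e 0) - J (e 1 - e 2) := map_sub J _ _
  -- bound instances
  have A1 := hhigh (e 0 + J (e 1 + e 2))
  rw [pow4 _ _ nXJP, eJP] at A1
  have A2 := hhigh (e 0 - J (e 1 + e 2))
  rw [pow4 _ _ nXmJP, eJmP] at A2
  have A3 := hlow (e 0 + J (e 1 + e 2))
  rw [pow4 _ _ nXJP, eJP] at A3
  have A4 := hlow (e 0 - J (e 1 + e 2))
  rw [pow4 _ _ nXmJP, eJmP] at A4
  have B1 := hhigh (e 0 + J (e 1 - e 2))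
  rw [pow4 _ _ nXJM, eJM] at B1
  have B2 := hhigh (e 0 - J (e 1 - e 2))
  rw [pow4 _ _ nXmJM, eJmM] at B2
  have B3 := hlow (e 0 + J (e 1 - e 2))
  rw [pow4 _ _ nXJM, eJM] at B3
  have B4 := hlow (e 0 - J (e 1 - e 2))
  rw [pow4 _ _ nXmJM, eJmM] at B4
  have C1 := hhigh (e 0 + (e 1 + e 2))
  rw [pow4 _ _ nXP, eP] at C1
  have C2 := hhigh (e 0 - (e 1 + e 2))
  rw [pow4 _ _ nXmP, emP] at C2
  have C3 := hlow (e 0 + (e 1 + e 2))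
  rw [pow4 _ _ nXP, eP] at C3
  have C4 := hlow (e 0 - (e 1 + e 2))
  rw [pow4 _ _ nXmP, emP] at C4
  have D1 := hhigh (e 0 + (e 1 - e 2))
  rw [pow4 _ _ nXM, eM] at D1
  have D2 := hhigh (e 0 - (e 1 - e 2))
  rw [pow4 _ _ nXmM, emM] at D2
  have D3 := hlow (e 0 + (e 1 - e 2))
  rw [pow4 _ _ nXM, eM] at D3
  have D4 := hlow (e 0 - (e 1 - e 2))
  rw [pow4 _ _ nXmM, emM] at D4
  have E1 := hhigh (e 0)
  rw [pow4 _ _ n0] at E1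
  have E2 := hlow (e 0)
  rw [pow4 _ _ n0] at E2
  have F1 := hhigh (e 1 + e 2)
  rw [pow4 _ _ nP] at F1
  have F2 := hlow (e 1 + e 2)
  rw [pow4 _ _ nP] at F2
  have G1 := hhigh (e 1 - e 2)
  rw [pow4 _ _ nM] at G1
  have G2 := hlow (e 1 - e 2)
  rw [pow4 _ _ nM] at G2
  -- relating the target component to the two sectional expressions
  have hS : R (e 0) (e 1 + e 2) (e 0) (e 1 + e 2)
      - R (e 0) (e 1 - e 2) (e 0) (e 1 - e 2)
      = 4 * R (e 1) (e 0) (e 2) (e 0) := by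
    simp only [map_add, map_sub, LinearMap.add_apply, LinearMap.sub_apply]
    linarith [hpair (e 0) (e 2) (e 0) (e 1), hskew1 (e 0) (e 1) (e 0) (e 2),
      hskew2 (e 1) (e 0) (e 0) (e 2)]
  have keyP := key (e 0) (e 1 + e 2)
  have keyM := key (e 0) (e 1 - e 2)
  constructor
  · linarith [keyP, keyM, hS, A3, A4, B1, B2, C1, C2, D3, D4, E1, E2, F1, G2]
  · linarith [keyP, keyM, hS, A1, A2, B3, B4, C3, C4, D1, D2, E1, E2, F2, G1]
end

section
/- If 1 ≤ λ ≤ 1 + 1/200, then 29(λ-1)/√((48-24λ)² + (29λ-29)²) < √3/3 ≤ √((13λ-10)/(3(λ+2))). -/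
theorem stmt_11 (l : ℝ) (h1 : 1 ≤ l) (h2 : l ≤ 1 + 1 / 200) :
    29 * (l - 1) / Real.sqrt ((48 - 24 * l) ^ 2 + (29 * l - 29) ^ 2) < Real.sqrt 3 / 3 ∧
    Real.sqrt 3 / 3 ≤ Real.sqrt ((13 * l - 10) / (3 * (l + 2))) := by
  have hs3 : Real.sqrt 3 ^ 2 = 3 := Real.sq_sqrt (by norm_num)
  have hs3n : 0 ≤ Real.sqrt 3 := Real.sqrt_nonneg 3
  have h3half : (1.5 : ℝ) < Real.sqrt 3 := by nlinarith
  constructor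
  · have hD : (23 : ℝ) ≤ Real.sqrt ((48 - 24 * l) ^ 2 + (29 * l - 29) ^ 2) := by
      rw [show (23:ℝ) = Real.sqrt (23^2) by rw [Real.sqrt_sq]; norm_num]
      apply Real.sqrt_le_sqrt
      nlinarith
    have hDpos : (0:ℝ) < Real.sqrt ((48 - 24 * l) ^ 2 + (29 * l - 29) ^ 2) := by linarith
    have : 29 * (l - 1) / Real.sqrt ((48 - 24 * l) ^ 2 + (29 * l - 29) ^ 2) < 1/2 := by
      rw [div_lt_iff₀ hDpos]
      nlinarith
    linarith
  · have e : Real.sqrt 3 / 3 = Real.sqrt (1/3) := by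
      rw [show (1/3:ℝ) = 3 / 9 by norm_num, Real.sqrt_div (by norm_num : (0:ℝ) ≤ 3),
        show (9:ℝ) = 3^2 by norm_num, Real.sqrt_sq (by norm_num : (0:ℝ) ≤ 3)]
    rw [e]
    apply Real.sqrt_le_sqrt
    rw [div_le_div_iff₀ (by norm_num) (by linarith)]
    linarith
end
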